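/- Let Σ and Σ' be d×d positive semidefinite matrices with Σ ⪯ Σ'. Define, for a symmetric d×d matrix A, the quadratic forms Q(A) = 2·‖Σ^{1/2} A Σ^{1/2}‖_F² and Q'(A) = 2·‖(Σ')^{1/2} A (Σ')^{1/2}‖_F². Then Q(A) ≤ Q'(A) for all symmetric A. Equivalently, if X ∼ N(0,Σ) and X' ∼ N(0,Σ'), then Cov[vec(XX^T)] ⪯ Cov[vec(X'X'^T)]. -/

import Mathlib

open Finset

namespace Matrix.PosSemidef

open scoped ComplexOrder

/-- The positive semidefinite square root, with its definition from the older Mathlib. -/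
noncomputable def sqrt {n 𝕜 : Type*} [Fintype n] [DecidableEq n] [RCLike 𝕜] {A : Matrix n n 𝕜}
    (hA : A.PosSemidef) : Matrix n n 𝕜 :=
  hA.1.eigenvectorUnitary.1 * diagonal ((↑) ∘ (√·) ∘ hA.1.eigenvalues) *
  (star hA.1.eigenvectorUnitary : Matrix n n 𝕜)

end Matrix.PosSemidef

open Matrix

lemma Matrix.PosSemidef.posSemidef_sqrt {d : ℕ} {P : Matrix (Fin d) (Fin d) ℝ}
    (hP : P.PosSemidef) : hP.sqrt.PosSemidef := by
  unfold Matrix.PosSemidef.sqrt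
  have hD : (diagonal ((RCLike.ofReal : ℝ → ℝ) ∘ (√·) ∘ hP.1.eigenvalues)).PosSemidef :=
    Matrix.PosSemidef.diagonal (fun i => by simp [Real.sqrt_nonneg])
  have := hD.mul_mul_conjTranspose_same (hP.1.eigenvectorUnitary.1)
  convert this using 2
  simp [Matrix.star_eq_conjTranspose]

lemma Matrix.PosSemidef.sqrt_mul_self {d : ℕ} {P : Matrix (Fin d) (Fin d) ℝ}
    (hP : P.PosSemidef) : hP.sqrt * hP.sqrt = P := by
  unfold Matrix.PosSemidef.sqrt
  set U := hP.1.eigenvectorUnitary with hU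
  have hUU : (star U : Matrix (Fin d) (Fin d) ℝ) * U.1 = 1 := by
    simp
  have hDD : diagonal ((RCLike.ofReal : ℝ → ℝ) ∘ (√·) ∘ hP.1.eigenvalues)
      * diagonal ((RCLike.ofReal : ℝ → ℝ) ∘ (√·) ∘ hP.1.eigenvalues)
      = diagonal (RCLike.ofReal ∘ hP.1.eigenvalues) := by
    rw [diagonal_mul_diagonal]
    congr 1
    funext i
    simp [Real.mul_self_sqrt (hP.eigenvalues_nonneg i)]
  calc _ = U.1 * (diagonal ((RCLike.ofReal : ℝ → ℝ) ∘ (√·) ∘ hP.1.eigenvalues)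
        * ((star U : Matrix (Fin d) (Fin d) ℝ) * U.1)
        * diagonal ((RCLike.ofReal : ℝ → ℝ) ∘ (√·) ∘ hP.1.eigenvalues))
        * (star U : Matrix (Fin d) (Fin d) ℝ) := by
          simp only [Matrix.mul_assoc]
    _ = P := by
      rw [hUU, Matrix.mul_one, hDD]
      conv_rhs => rw [hP.1.spectral_theorem]
      simp [Unitary.conjStarAlgAut_apply, hU, Matrix.mul_assoc]

lemma psd_trace_nonneg {d : ℕ} {P : Matrix (Fin d) (Fin d) ℝ} (hP : P.PosSemidef) :
    0 ≤ P.trace := by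
  rw [Matrix.trace]
  refine Finset.sum_nonneg fun i _ => ?_
  have := hP.diag_nonneg (i := i)
  simpa [dotProduct, Matrix.mulVec, Pi.single_apply] using this

lemma trace_mul_psd_nonneg {d : ℕ} {P Q : Matrix (Fin d) (Fin d) ℝ}
    (hP : P.PosSemidef) (hQ : Q.PosSemidef) : 0 ≤ (P * Q).trace := by
  obtain ⟨S, hSpsd, hSS⟩ : ∃ S : Matrix (Fin d) (Fin d) ℝ, S.PosSemidef ∧ S * S = P :=
    ⟨hP.sqrt, hP.posSemidef_sqrt, hP.sqrt_mul_self⟩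
  rw [← hSS, mul_assoc, Matrix.trace_mul_comm]
  have h2 : (S * Q * S).PosSemidef := by
    have := hQ.mul_mul_conjTranspose_same S
    rwa [hSpsd.isHermitian.eq] at this
  exact psd_trace_nonneg h2

lemma sum_sq_eq_trace {d : ℕ} (M : Matrix (Fin d) (Fin d) ℝ) :
    ∑ i, ∑ j, (M i j) ^ 2 = (Mᵀ * M).trace := by
  simp only [Matrix.trace, Matrix.diag, Matrix.mul_apply, Matrix.transpose_apply, sq]
  rw [Finset.sum_comm]

lemma frob_eq {d : ℕ} {Sg : Matrix (Fin d) (Fin d) ℝ} (h : Sg.PosSemidef)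
    (A : Matrix (Fin d) (Fin d) ℝ) (hA : A.IsSymm) :
    ∑ i, ∑ j, ((h.sqrt * A * h.sqrt) i j) ^ 2 = (A * Sg * A * Sg).trace := by
  have hSsym : h.sqrtᵀ = h.sqrt := h.posSemidef_sqrt.isHermitian.eq
  have hSS : h.sqrt * h.sqrt = Sg := h.sqrt_mul_self
  set S := h.sqrt with hS
  clear_value S
  rw [sum_sq_eq_trace]
  have hT : (S * A * S)ᵀ = S * A * S := by
    rw [Matrix.transpose_mul, Matrix.transpose_mul, hSsym, hA.eq, mul_assoc]
  rw [hT]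
  have e : (S * A * S) * (S * A * S) = S * (A * (S * S) * A * S) := by
    noncomm_ring
  rw [e, Matrix.trace_mul_comm, hSS]
  congr 1
  rw [mul_assoc, mul_assoc, mul_assoc, hSS]
  noncomm_ring

theorem stmt13 (d : ℕ) (Sig Sig' : Matrix (Fin d) (Fin d) ℝ)
    (hSig : Sig.PosSemidef) (hSig' : Sig'.PosSemidef)
    (hle : (Sig' - Sig).PosSemidef)
    (A : Matrix (Fin d) (Fin d) ℝ) (hA : A.IsSymm) :
    2 * ∑ i, ∑ j, ((hSig.sqrt * A * hSig.sqrt) i j) ^ 2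
      ≤ 2 * ∑ i, ∑ j, ((hSig'.sqrt * A * hSig'.sqrt) i j) ^ 2 := by
  rw [frob_eq hSig A hA, frob_eq hSig' A hA]
  have hAc : Aᴴ = A := by
    ext i j
    simp [Matrix.conjTranspose_apply, hA.apply]
  have hP1 : (A * (Sig' - Sig) * A).PosSemidef := by
    have := hle.mul_mul_conjTranspose_same A
    rwa [hAc] at this
  have hP2 : (A * Sig * A).PosSemidef := by
    have := hSig.mul_mul_conjTranspose_same A
    rwa [hAc] at this
  have h1 : 0 ≤ ((A * (Sig' - Sig) * A) * Sig').trace := trace_mul_psd_nonneg hP1 hSig'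
  have h2 : 0 ≤ ((A * Sig * A) * (Sig' - Sig)).trace := trace_mul_psd_nonneg hP2 hle
  have key : A * Sig' * A * Sig'
      = A * Sig * A * Sig + ((A * (Sig' - Sig) * A) * Sig' + (A * Sig * A) * (Sig' - Sig)) := by
    noncomm_ring
  rw [key, Matrix.trace_add, Matrix.trace_add]
  linarith
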